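/- Arbitrarily many sequential detections for the generalized-GHZ mixed family: For every integer N ≥ 3, every α ∈ (0,1), every p_1 > 0, p_2, p_3 ≥ 0 with p_1+p_2+p_3 = 1, and every natural number n, there exist sharpness parameters λ_1, …, λ_n ∈ (0,1) such that, setting ρ_1 = p_1|ψ⟩⟨ψ| + p_2|0…0⟩⟨0…0| + p_3|1…1⟩⟨1…1| with |ψ⟩ = √α|0…0⟩ + √(1−α)|1…1⟩, and ρ_k = (id ⊗ Φ_{λ_{k−1}})(ρ_{k−1}) for 2 ≤ k ≤ n (the map acting on the N-th qubit), one has Tr(W^{λ_k} ρ_k) < 0 for every k = 1, …, n. -/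

import Mathlib

open Matrix
open scoped ComplexOrder

noncomputable section

/-- The space of operators on `N` qubits: complex `2^N × 2^N` matrices, with the
`N`-fold tensor-product structure made explicit by indexing rows and columns by
functions `Fin N → Fin 2`. -/
abbrev QM (N : ℕ) := Matrix (Fin N → Fin 2) (Fin N → Fin 2) ℂ

/-- The Pauli matrix σ_x. -/
def sigx : Matrix (Fin 2) (Fin 2) ℂ := !![0, 1; 1, 0]

/-- The Pauli matrix σ_z. -/
def sigz : Matrix (Fin 2) (Fin 2) ℂ := !![1, 0; 0, -1]

/-- The tensor (Kronecker) product `f 0 ⊗ f 1 ⊗ ⋯ ⊗ f (N-1)` of single-qubit operators. -/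
def tensorAll (N : ℕ) (f : Fin N → Matrix (Fin 2) (Fin 2) ℂ) : QM N :=
  Matrix.of fun v w => ∏ i, f i (v i) (w i)

/-- The single-qubit operator `M` acting on qubit `m`, tensored with the identity
on all other qubits. -/
def site (N : ℕ) (m : Fin N) (M : Matrix (Fin 2) (Fin 2) ℂ) : QM N :=
  tensorAll N (fun i => if i = m then M else 1)

/-- GHZ stabilizer generator `S_1 = σ_x^(1) σ_x^(2) ⋯ σ_x^(N)`. -/
def ghzS1 (N : ℕ) : QM N := tensorAll N (fun _ => sigx)

/-- GHZ stabilizer generator with σ_z on qubits `m-1` and `m` (0-based `m : Fin N`,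
`m ≠ 0`); it represents the 1-based generator `S_{m+1} = σ_z^{(m)} σ_z^{(m+1)}`. -/
def ghzSz (N : ℕ) (m : Fin N) : QM N :=
  tensorAll N (fun i => if i.val = m.val - 1 ∨ i = m then sigz else 1)

/-- The product `∏_{m=2}^{N} (I + S_m)/2` appearing in the GHZ witness
(the factors pairwise commute, so the list ordering is immaterial). -/
def ghzProd (N : ℕ) : QM N :=
  (((List.finRange N).filter (fun m => m.val ≠ 0)).map
    (fun m => (1/2 : ℂ) • ((1 : QM N) + ghzSz N m))).prod

/-- The GHZ genuine-multipartite-entanglement witness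
`W = 3 I − 2 [ (I + S_1)/2 + ∏_{m=2}^N (I + S_m)/2 ]`. -/
def ghzWitness (N : ℕ) : QM N :=
  (3 : ℂ) • (1 : QM N) -
    (2 : ℂ) • ((1/2 : ℂ) • ((1 : QM N) + ghzS1 N) + ghzProd N)

/-- The modified (unsharp) GHZ witness
`W^λ = 3 I − 2 [ (I + λ S_1)/2 + ∏_{m=2}^N (I + S_m)/2 ]`. -/
def ghzWitnessMod (N : ℕ) (lam : ℝ) : QM N :=
  (3 : ℂ) • (1 : QM N) -
    (2 : ℂ) • ((1/2 : ℂ) • ((1 : QM N) + (lam : ℂ) • ghzS1 N) + ghzProd N)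

/-- The rank-one projector `|ψ⟩⟨ψ|` onto a vector `ψ`. -/
def outer (N : ℕ) (ψ : (Fin N → Fin 2) → ℂ) : QM N :=
  Matrix.vecMulVec ψ (star ψ)

/-- The computational basis vector `|0…0⟩ = |0⟩^{⊗N}`. -/
def allZero (N : ℕ) : (Fin N → Fin 2) → ℂ := fun v => if ∀ i, v i = 0 then 1 else 0

/-- The computational basis vector `|1…1⟩ = |1⟩^{⊗N}`. -/
def allOne (N : ℕ) : (Fin N → Fin 2) → ℂ := fun v => if ∀ i, v i = 1 then 1 else 0

/-- The generalized GHZ state vector `|ψ⟩ = √α |0…0⟩ + √(1−α) |1…1⟩`. -/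
def genGhzVec (N : ℕ) (α : ℝ) : (Fin N → Fin 2) → ℂ := fun v =>
  if ∀ i, v i = 0 then ((Real.sqrt α : ℝ) : ℂ)
  else if ∀ i, v i = 1 then ((Real.sqrt (1 - α) : ℝ) : ℂ) else 0

/-- The mixed state `ρ₁ = p₁|ψ⟩⟨ψ| + p₂|0…0⟩⟨0…0| + p₃|1…1⟩⟨1…1|`. -/
def mixedState (N : ℕ) (α p₁ p₂ p₃ : ℝ) : QM N :=
  (p₁ : ℂ) • outer N (genGhzVec N α) + (p₂ : ℂ) • outer N (allZero N)
    + (p₃ : ℂ) • outer N (allOne N)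

/-- The single-qubit unsharp-measurement channel
`Φ_λ(ρ) = ((2+√(1−λ²))/4)ρ + (1/4)σ_z ρ σ_z + ((1−√(1−λ²))/4)σ_x ρ σ_x`, applied to
qubit `m` of an `N`-qubit operator (and acting as the identity on the other qubits). -/
def phiMap (N : ℕ) (m : Fin N) (lam : ℝ) (ρ : QM N) : QM N :=
  (((2 + Real.sqrt (1 - lam ^ 2)) / 4 : ℝ) : ℂ) • ρ
    + (1/4 : ℂ) • (site N m sigz * ρ * site N m sigz)
    + (((1 - Real.sqrt (1 - lam ^ 2)) / 4 : ℝ) : ℂ) • (site N m sigx * ρ * site N m sigx)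

-- auxiliary definitions
/-- zs: diagonal entries of sigz. -/
def zsC : Fin 2 → ℂ := fun a => if a = 0 then 1 else -1

/-- bit flip -/
def bflip : Fin 2 → Fin 2 := fun a => if a = 0 then 1 else 0

lemma sigz_eq : sigz = Matrix.diagonal zsC := by
  ext a b
  fin_cases a <;> fin_cases b <;> simp [sigz, zsC, Matrix.diagonal]

lemma sigx_apply (a b : Fin 2) : sigx a b = if a = bflip b then 1 else 0 := by
  fin_cases a <;> fin_cases b <;> simp [sigx, bflip]

lemma tensorAll_diagonal (N : ℕ) (d : Fin N → Fin 2 → ℂ) :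
    tensorAll N (fun i => Matrix.diagonal (d i)) =
      Matrix.diagonal (fun v => ∏ i, d i (v i)) := by
  ext v w
  by_cases h : v = w
  · subst h
    simp [tensorAll, Matrix.diagonal]
  · have : ∃ i, v i ≠ w i := by
      by_contra hc
      push_neg at hc
      exact h (funext hc)
    obtain ⟨i, hi⟩ := this
    rw [Matrix.diagonal_apply_ne _ h]
    simp only [tensorAll, Matrix.of_apply]
    exact Finset.prod_eq_zero (Finset.mem_univ i) (Matrix.diagonal_apply_ne _ hi)

def szD (N : ℕ) (m : Fin N) : (Fin N → Fin 2) → ℂ :=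
  fun v => ∏ i, (if i.val = m.val - 1 ∨ i = m then zsC (v i) else 1)

lemma ghzSz_eq_diagonal (N : ℕ) (m : Fin N) :
    ghzSz N m = Matrix.diagonal (szD N m) := by
  have : (fun i : Fin N => if i.val = m.val - 1 ∨ i = m then sigz else 1) =
      (fun i => Matrix.diagonal (fun a => if i.val = m.val - 1 ∨ i = m then zsC a else 1)) := by
    funext i
    split_ifs with h <;> simp [sigz_eq, h, Matrix.diagonal_one]
  rw [ghzSz, this, tensorAll_diagonal]
  rfl

lemma prod_map_diagonal {n : Type*} [DecidableEq n] [Fintype n] {β : Type*}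
    (l : List β) (g : β → n → ℂ) :
    (l.map (fun m => Matrix.diagonal (g m))).prod =
      Matrix.diagonal (fun v => (l.map (fun m => g m v)).prod) := by
  induction l with
  | nil => simp [Matrix.diagonal_one]
  | cons a t ih =>
      simp only [List.map_cons, List.prod_cons, ih, Matrix.diagonal_mul_diagonal]

def prodD (N : ℕ) : (Fin N → Fin 2) → ℂ := fun v =>
  (((List.finRange N).filter (fun m => m.val ≠ 0)).map
    (fun m => (1 + szD N m v) / 2)).prod

lemma ghzProd_eq_diagonal (N : ℕ) :
    ghzProd N = Matrix.diagonal (prodD N) := by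
  have h1 : ∀ m : Fin N, (1/2 : ℂ) • ((1 : QM N) + ghzSz N m) =
      Matrix.diagonal (fun v => (1 + szD N m v) / 2) := by
    intro m
    rw [ghzSz_eq_diagonal, ← Matrix.diagonal_one, Matrix.diagonal_add,
      ← Matrix.diagonal_smul]
    have h : ((1/2 : ℂ) • fun v => 1 + szD N m v) = (fun v => (1 + szD N m v) / 2) := by
      funext v
      simp only [Pi.smul_apply, smul_eq_mul]
      ring
    rw [h]
  rw [ghzProd]
  have h2 : (((List.finRange N).filter (fun m => m.val ≠ 0)).map
      (fun m => (1/2 : ℂ) • ((1 : QM N) + ghzSz N m))) =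
      (((List.finRange N).filter (fun m => m.val ≠ 0)).map
      (fun m => Matrix.diagonal (fun v => (1 + szD N m v) / 2))) := by
    exact List.map_congr_left (fun m _ => h1 m)
  rw [h2, prod_map_diagonal]
  rfl

def vz (N : ℕ) : Fin N → Fin 2 := fun _ => 0
def vo (N : ℕ) : Fin N → Fin 2 := fun _ => 1
def vzf (N : ℕ) : Fin N → Fin 2 := fun i => if i.val = N - 1 then 1 else 0
def vof (N : ℕ) : Fin N → Fin 2 := fun i => if i.val = N - 1 then 0 else 1

lemma prod_if_two {N : ℕ} (m : Fin N) (hm : m.val ≠ 0) (c : Fin N → ℂ) :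
    (∏ i, (if i.val = m.val - 1 ∨ i = m then c i else 1)) =
      c ⟨m.val - 1, lt_of_le_of_lt (Nat.sub_le _ _) m.isLt⟩ * c m := by
  set i₁ : Fin N := ⟨m.val - 1, lt_of_le_of_lt (Nat.sub_le _ _) m.isLt⟩ with hi₁
  have hne : i₁ ≠ m := by
    simp only [Fin.ne_iff_vne, hi₁]
    omega
  have hcond : ∀ i : Fin N, (i.val = m.val - 1 ∨ i = m) ↔ (i = i₁ ∨ i = m) := by
    intro i
    rw [Fin.ext_iff (b := i₁)]
  have h1 : (∏ i, (if i.val = m.val - 1 ∨ i = m then c i else 1)) =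
      ∏ i, (if i = i₁ ∨ i = m then c i else 1) := by
    apply Finset.prod_congr rfl
    intro i _
    rw [if_congr (hcond i) rfl rfl]
  rw [h1]
  rw [← Finset.prod_subset (Finset.subset_univ ({i₁, m} : Finset (Fin N)))
    (fun x _ hx => by
      rw [if_neg]
      intro hc
      apply hx
      simp only [Finset.mem_insert, Finset.mem_singleton]
      exact hc)]
  rw [Finset.prod_pair hne]
  rw [if_pos (Or.inl rfl), if_pos (Or.inr rfl)]

lemma szD_vz {N : ℕ} (m : Fin N) (hm : m.val ≠ 0) : szD N m (vz N) = 1 := by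
  rw [szD, prod_if_two m hm]
  simp [vz, zsC]

lemma szD_vo {N : ℕ} (m : Fin N) (hm : m.val ≠ 0) : szD N m (vo N) = 1 := by
  rw [szD, prod_if_two m hm]
  simp [vo, zsC]

def lastIdx (N : ℕ) (hN : 3 ≤ N) : Fin N := ⟨N - 1, (by omega : N - 1 < N + 0)⟩

lemma szD_vzf {N : ℕ} (hN : 3 ≤ N) : szD N (lastIdx N hN) (vzf N) = -1 := by
  rw [szD, prod_if_two _ (by simp [lastIdx]; omega)]
  have e1 : vzf N ⟨(lastIdx N hN).val - 1,
      lt_of_le_of_lt (Nat.sub_le _ _) (lastIdx N hN).isLt⟩ = 0 := by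
    simp only [vzf, lastIdx, Fin.val_mk]
    exact if_neg (by omega)
  have e2 : vzf N (lastIdx N hN) = 1 := by
    simp [vzf, lastIdx]
  rw [e1, e2]
  simp [zsC]

lemma szD_vof {N : ℕ} (hN : 3 ≤ N) : szD N (lastIdx N hN) (vof N) = -1 := by
  rw [szD, prod_if_two _ (by simp [lastIdx]; omega)]
  have e1 : vof N ⟨(lastIdx N hN).val - 1,
      lt_of_le_of_lt (Nat.sub_le _ _) (lastIdx N hN).isLt⟩ = 1 := by
    simp only [vof, lastIdx, Fin.val_mk]
    exact if_neg (by omega)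
  have e2 : vof N (lastIdx N hN) = 0 := by
    simp [vof, lastIdx]
  rw [e1, e2]
  simp [zsC]

lemma lastIdx_mem {N : ℕ} (hN : 3 ≤ N) :
    lastIdx N hN ∈ (List.finRange N).filter (fun m => m.val ≠ 0) := by
  rw [List.mem_filter]
  refine ⟨List.mem_finRange _, ?_⟩
  simp [lastIdx]
  exact decide_eq_true (by omega)

lemma prodD_vz {N : ℕ} : prodD N (vz N) = 1 := by
  apply List.prod_eq_one
  intro x hx
  rw [List.mem_map] at hx
  obtain ⟨m, hm, rfl⟩ := hx
  rw [List.mem_filter] at hm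
  have : m.val ≠ 0 := by simpa using hm.2
  rw [szD_vz m this]
  norm_num

lemma prodD_vo {N : ℕ} : prodD N (vo N) = 1 := by
  apply List.prod_eq_one
  intro x hx
  rw [List.mem_map] at hx
  obtain ⟨m, hm, rfl⟩ := hx
  rw [List.mem_filter] at hm
  have : m.val ≠ 0 := by simpa using hm.2
  rw [szD_vo m this]
  norm_num

lemma prodD_vzf {N : ℕ} (hN : 3 ≤ N) : prodD N (vzf N) = 0 := by
  apply List.prod_eq_zero
  rw [List.mem_map]
  exact ⟨lastIdx N hN, lastIdx_mem hN, by rw [szD_vzf hN]; norm_num⟩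

lemma prodD_vof {N : ℕ} (hN : 3 ≤ N) : prodD N (vof N) = 0 := by
  apply List.prod_eq_zero
  rw [List.mem_map]
  exact ⟨lastIdx N hN, lastIdx_mem hN, by rw [szD_vof hN]; norm_num⟩

lemma ghzS1_apply {N : ℕ} (v w : Fin N → Fin 2) :
    ghzS1 N v w = if ∀ i, v i = bflip (w i) then 1 else 0 := by
  simp only [ghzS1, tensorAll, Matrix.of_apply]
  split_ifs with h
  · exact Finset.prod_eq_one (fun i _ => by rw [sigx_apply, if_pos (h i)])
  · push_neg at h
    obtain ⟨i, hi⟩ := h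
    exact Finset.prod_eq_zero (Finset.mem_univ i) (by rw [sigx_apply, if_neg hi])

-- basic bflip values
lemma bflip_zero : bflip 0 = 1 := rfl
lemma bflip_one : bflip 1 = 0 := rfl

def idx0 (N : ℕ) (hN : 3 ≤ N) : Fin N := ⟨0, by omega⟩

lemma vzf_idx0 {N : ℕ} (hN : 3 ≤ N) : vzf N (idx0 N hN) = 0 := by
  simp only [vzf, idx0, Fin.val_mk]
  exact if_neg (by omega)

lemma vof_idx0 {N : ℕ} (hN : 3 ≤ N) : vof N (idx0 N hN) = 1 := by
  simp only [vof, idx0, Fin.val_mk]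
  exact if_neg (by omega)

lemma S1_zz {N : ℕ} (hN : 3 ≤ N) : ghzS1 N (vz N) (vz N) = 0 := by
  rw [ghzS1_apply, if_neg]
  intro h
  have := h (idx0 N hN)
  simp [vz, bflip] at this

lemma S1_oo {N : ℕ} (hN : 3 ≤ N) : ghzS1 N (vo N) (vo N) = 0 := by
  rw [ghzS1_apply, if_neg]
  intro h
  have := h (idx0 N hN)
  simp [vo, bflip] at this

lemma S1_zo {N : ℕ} (hN : 3 ≤ N) : ghzS1 N (vz N) (vo N) = 1 := by
  rw [ghzS1_apply, if_pos (fun i => by simp [vz, vo, bflip])]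

lemma S1_oz {N : ℕ} (hN : 3 ≤ N) : ghzS1 N (vo N) (vz N) = 1 := by
  rw [ghzS1_apply, if_pos (fun i => by simp [vz, vo, bflip])]

lemma S1_ff {N : ℕ} (hN : 3 ≤ N) : ghzS1 N (vzf N) (vzf N) = 0 := by
  rw [ghzS1_apply, if_neg]
  intro h
  have := h (idx0 N hN)
  rw [vzf_idx0 hN] at this
  simp [bflip] at this

lemma S1_gg {N : ℕ} (hN : 3 ≤ N) : ghzS1 N (vof N) (vof N) = 0 := by
  rw [ghzS1_apply, if_neg]
  intro h
  have := h (idx0 N hN)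
  rw [vof_idx0 hN] at this
  simp [bflip] at this

lemma S1_fg {N : ℕ} (hN : 3 ≤ N) : ghzS1 N (vzf N) (vof N) = 1 := by
  rw [ghzS1_apply, if_pos]
  intro i
  simp only [vzf, vof]
  by_cases h : i.val = N - 1 <;> simp [h, bflip]

lemma S1_gf {N : ℕ} (hN : 3 ≤ N) : ghzS1 N (vof N) (vzf N) = 1 := by
  rw [ghzS1_apply, if_pos]
  intro i
  simp only [vzf, vof]
  by_cases h : i.val = N - 1 <;> simp [h, bflip]

-- distinctness
lemma vz_ne_vo {N : ℕ} (hN : 3 ≤ N) : vz N ≠ vo N := by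
  intro h
  have := congrFun h (idx0 N hN)
  simp [vz, vo] at this

lemma vzf_ne_vof {N : ℕ} (hN : 3 ≤ N) : vzf N ≠ vof N := by
  intro h
  have := congrFun h (idx0 N hN)
  rw [vzf_idx0 hN, vof_idx0 hN] at this
  exact absurd this (by decide)


lemma wit_apply {N : ℕ} (lam : ℝ) (v w : Fin N → Fin 2) :
    ghzWitnessMod N lam v w =
      3 * (1 : QM N) v w - ((1 : QM N) v w + lam * ghzS1 N v w)
        - 2 * Matrix.diagonal (prodD N) v w := by
  simp only [ghzWitnessMod, ghzProd_eq_diagonal, Matrix.sub_apply, Matrix.add_apply,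
    Matrix.smul_apply, smul_eq_mul]
  ring

lemma W_zz {N : ℕ} (hN : 3 ≤ N) (lam : ℝ) : ghzWitnessMod N lam (vz N) (vz N) = 0 := by
  rw [wit_apply, S1_zz hN, Matrix.one_apply_eq, Matrix.diagonal_apply_eq, prodD_vz]
  ring

lemma W_oo {N : ℕ} (hN : 3 ≤ N) (lam : ℝ) : ghzWitnessMod N lam (vo N) (vo N) = 0 := by
  rw [wit_apply, S1_oo hN, Matrix.one_apply_eq, Matrix.diagonal_apply_eq, prodD_vo]
  ring

lemma W_zo {N : ℕ} (hN : 3 ≤ N) (lam : ℝ) :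
    ghzWitnessMod N lam (vz N) (vo N) = -lam := by
  rw [wit_apply, S1_zo hN, Matrix.one_apply_ne (vz_ne_vo hN),
    Matrix.diagonal_apply_ne _ (vz_ne_vo hN)]
  ring

lemma W_oz {N : ℕ} (hN : 3 ≤ N) (lam : ℝ) :
    ghzWitnessMod N lam (vo N) (vz N) = -lam := by
  rw [wit_apply, S1_oz hN, Matrix.one_apply_ne (Ne.symm (vz_ne_vo hN)),
    Matrix.diagonal_apply_ne _ (Ne.symm (vz_ne_vo hN))]
  ring

lemma W_ff {N : ℕ} (hN : 3 ≤ N) (lam : ℝ) :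
    ghzWitnessMod N lam (vzf N) (vzf N) = 2 := by
  rw [wit_apply, S1_ff hN, Matrix.one_apply_eq, Matrix.diagonal_apply_eq, prodD_vzf hN]
  ring

lemma W_gg {N : ℕ} (hN : 3 ≤ N) (lam : ℝ) :
    ghzWitnessMod N lam (vof N) (vof N) = 2 := by
  rw [wit_apply, S1_gg hN, Matrix.one_apply_eq, Matrix.diagonal_apply_eq, prodD_vof hN]
  ring

lemma W_fg {N : ℕ} (hN : 3 ≤ N) (lam : ℝ) :
    ghzWitnessMod N lam (vzf N) (vof N) = -lam := by
  rw [wit_apply, S1_fg hN, Matrix.one_apply_ne (vzf_ne_vof hN),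
    Matrix.diagonal_apply_ne _ (vzf_ne_vof hN)]
  ring

lemma W_gf {N : ℕ} (hN : 3 ≤ N) (lam : ℝ) :
    ghzWitnessMod N lam (vof N) (vzf N) = -lam := by
  rw [wit_apply, S1_gf hN, Matrix.one_apply_ne (Ne.symm (vzf_ne_vof hN)),
    Matrix.diagonal_apply_ne _ (Ne.symm (vzf_ne_vof hN))]
  ring

lemma trace_mul_std {N : ℕ} (A : QM N) (v w : Fin N → Fin 2) :
    (A * Matrix.single v w (1 : ℂ)).trace = A w v := by
  rw [Matrix.trace]
  rw [Finset.sum_eq_single w]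
  · simp [Matrix.diag]
  · intro b _ hb
    simpa [Matrix.diag] using Matrix.mul_single_apply_of_ne (c := (1:ℂ)) v w b b hb A
  · simp

/-- The 8-parameter family of matrices preserved by the dynamics. -/
def fam (N : ℕ) (a b c a' b' d : ℝ) : QM N :=
  (a : ℂ) • Matrix.single (vz N) (vz N) (1 : ℂ)
  + (b : ℂ) • Matrix.single (vo N) (vo N) (1 : ℂ)
  + (c : ℂ) • (Matrix.single (vz N) (vo N) (1 : ℂ)
      + Matrix.single (vo N) (vz N) (1 : ℂ))
  + (a' : ℂ) • Matrix.single (vzf N) (vzf N) (1 : ℂ)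
  + (b' : ℂ) • Matrix.single (vof N) (vof N) (1 : ℂ)
  + (d : ℂ) • (Matrix.single (vzf N) (vof N) (1 : ℂ)
      + Matrix.single (vof N) (vzf N) (1 : ℂ))

lemma trace_W_fam {N : ℕ} (hN : 3 ≤ N) (lam a b c a' b' d : ℝ) :
    (ghzWitnessMod N lam * fam N a b c a' b' d).trace
      = ((2 * (a' + b') - 2 * lam * (c + d) : ℝ) : ℂ) := by
  simp only [fam, mul_add, mul_smul_comm, Matrix.trace_add, Matrix.trace_smul,
    trace_mul_std, smul_eq_mul]
  rw [W_zz hN, W_oo hN, W_zo hN, W_oz hN, W_ff hN, W_gg hN, W_fg hN, W_gf hN]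
  push_cast
  ring

lemma site_sigz (N : ℕ) (m : Fin N) :
    site N m sigz = Matrix.diagonal (fun v => zsC (v m)) := by
  rw [site]
  have h : (fun i : Fin N => if i = m then sigz else 1) =
      (fun i => Matrix.diagonal (fun a => if i = m then zsC a else 1)) := by
    funext i
    split_ifs with h <;> simp [sigz_eq, h, Matrix.diagonal_one]
  rw [h, tensorAll_diagonal]
  have h2 : (fun v : Fin N → Fin 2 => ∏ i, (fun a => if i = m then zsC a else 1) (v i))
      = (fun v => zsC (v m)) := by
    funext v
    simp
  rw [h2]

lemma site_sigx_apply (N : ℕ) (m : Fin N) (a b : Fin N → Fin 2) :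
    site N m sigx a b =
      if a = Function.update b m (bflip (b m)) then 1 else 0 := by
  simp only [site, tensorAll, Matrix.of_apply]
  by_cases h : a = Function.update b m (bflip (b m))
  · rw [if_pos h]
    apply Finset.prod_eq_one
    intro i _
    by_cases him : i = m
    · subst him
      rw [if_pos rfl, h, Function.update_self, sigx_apply, if_pos rfl]
    · rw [if_neg him, h, Function.update_of_ne him]
      exact Matrix.one_apply_eq _
  · rw [if_neg h]
    have : ∃ i, a i ≠ Function.update b m (bflip (b m)) i := by
      by_contra hc
      push_neg at hc
      exact h (funext hc)
    obtain ⟨i, hi⟩ := this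
    apply Finset.prod_eq_zero (Finset.mem_univ i)
    by_cases him : i = m
    · subst him
      rw [if_pos rfl, sigx_apply, if_neg]
      rwa [Function.update_self] at hi
    · rw [if_neg him]
      rw [Function.update_of_ne him] at hi
      exact Matrix.one_apply_ne hi

/-- flip of the m-th bit -/
def updf {N : ℕ} (m : Fin N) (v : Fin N → Fin 2) : Fin N → Fin 2 :=
  Function.update v m (bflip (v m))

lemma bflip_bflip (a : Fin 2) : bflip (bflip a) = a := by fin_cases a <;> rfl

lemma updf_updf {N : ℕ} (m : Fin N) (v : Fin N → Fin 2) : updf m (updf m v) = v := by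
  funext i
  by_cases h : i = m
  · subst h
    simp [updf, Function.update_self, bflip_bflip]
  · simp [updf, Function.update_of_ne h]

lemma site_sigx_apply' (N : ℕ) (m : Fin N) (a b : Fin N → Fin 2) :
    site N m sigx a b = if a = updf m b then 1 else 0 := site_sigx_apply N m a b

lemma conjZ {N : ℕ} (m : Fin N) (v w : Fin N → Fin 2) :
    site N m sigz * Matrix.single v w (1 : ℂ) * site N m sigz
      = (zsC (v m) * zsC (w m)) • Matrix.single v w (1 : ℂ) := by
  rw [site_sigz]
  ext a b
  simp only [Matrix.diagonal_mul, Matrix.mul_diagonal, Matrix.smul_apply, smul_eq_mul]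
  by_cases h : v = a ∧ w = b
  · obtain ⟨rfl, rfl⟩ := h
    simp only [Matrix.single_apply_same]
    ring
  · rw [Matrix.single_apply_of_ne _ _ _ _ _ h]
    ring

lemma conjX {N : ℕ} (m : Fin N) (v w : Fin N → Fin 2) :
    site N m sigx * Matrix.single v w (1 : ℂ) * site N m sigx
      = Matrix.single (updf m v) (updf m w) (1 : ℂ) := by
  ext a b
  rw [Matrix.mul_apply]
  have h1 : ∀ c, (site N m sigx * Matrix.single v w (1:ℂ)) a c
      = if a = updf m v then (if w = c then 1 else 0) else 0 := by
    intro c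
    rw [Matrix.mul_apply]
    rw [Finset.sum_eq_single v]
    · rw [site_sigx_apply' N m a v]
      by_cases h : w = c
      · subst h
        simp [Matrix.single_apply_same]
      · rw [Matrix.single_apply_of_ne _ _ _ _ _ (by tauto)]
        simp [h]
    · intro e _ he
      rw [Matrix.single_apply_of_ne _ _ _ _ _ (by tauto), mul_zero]
    · simp
  simp only [h1]
  by_cases ha : a = updf m v
  · simp only [if_pos ha, boole_mul]
    rw [Finset.sum_ite_eq]
    rw [if_pos (Finset.mem_univ w), site_sigx_apply']
    have hiff : (w = updf m b) ↔ (updf m w = b) :=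
      ⟨fun h => by rw [h, updf_updf], fun h => by rw [← h, updf_updf]⟩
    subst ha
    by_cases hb : updf m w = b
    · rw [if_pos (hiff.mpr hb)]
      subst hb
      exact (Matrix.single_apply_same _ _ _).symm
    · rw [if_neg (fun hc => hb (hiff.mp hc))]
      rw [Matrix.single_apply_of_ne]
      tauto
  · simp only [if_neg ha, zero_mul, Finset.sum_const_zero]
    rw [Matrix.single_apply_of_ne]
    intro hc
    exact ha hc.1.symm

lemma zsC_zero : zsC 0 = 1 := rfl
lemma zsC_one : zsC 1 = -1 := rfl

lemma vzf_last {N : ℕ} (hN : 3 ≤ N) : vzf N (lastIdx N hN) = 1 := by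
  simp [vzf, lastIdx]

lemma vof_last {N : ℕ} (hN : 3 ≤ N) : vof N (lastIdx N hN) = 0 := by
  simp [vof, lastIdx]

lemma updf_vz {N : ℕ} (hN : 3 ≤ N) : updf (lastIdx N hN) (vz N) = vzf N := by
  funext i
  by_cases h : i = lastIdx N hN
  · subst h
    rw [updf, Function.update_self, vzf_last hN]
    rfl
  · rw [updf, Function.update_of_ne h]
    simp only [vz, vzf]
    rw [if_neg]
    intro hc
    exact h (Fin.ext (by simpa [lastIdx] using hc))

lemma updf_vo {N : ℕ} (hN : 3 ≤ N) : updf (lastIdx N hN) (vo N) = vof N := by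
  funext i
  by_cases h : i = lastIdx N hN
  · subst h
    rw [updf, Function.update_self, vof_last hN]
    rfl
  · rw [updf, Function.update_of_ne h]
    simp only [vo, vof]
    rw [if_neg]
    intro hc
    exact h (Fin.ext (by simpa [lastIdx] using hc))

lemma updf_vzf {N : ℕ} (hN : 3 ≤ N) : updf (lastIdx N hN) (vzf N) = vz N := by
  rw [← updf_vz hN, updf_updf]

lemma updf_vof {N : ℕ} (hN : 3 ≤ N) : updf (lastIdx N hN) (vof N) = vo N := by
  rw [← updf_vo hN, updf_updf]

lemma phiMap_fam {N : ℕ} (hN : 3 ≤ N) (lam a b c a' b' d : ℝ) :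
    phiMap N (lastIdx N hN) lam (fam N a b c a' b' d) =
      fam N
        (((3 + Real.sqrt (1 - lam ^ 2)) / 4) * a + ((1 - Real.sqrt (1 - lam ^ 2)) / 4) * a')
        (((3 + Real.sqrt (1 - lam ^ 2)) / 4) * b + ((1 - Real.sqrt (1 - lam ^ 2)) / 4) * b')
        (((1 + Real.sqrt (1 - lam ^ 2)) / 4) * c + ((1 - Real.sqrt (1 - lam ^ 2)) / 4) * d)
        (((3 + Real.sqrt (1 - lam ^ 2)) / 4) * a' + ((1 - Real.sqrt (1 - lam ^ 2)) / 4) * a)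
        (((3 + Real.sqrt (1 - lam ^ 2)) / 4) * b' + ((1 - Real.sqrt (1 - lam ^ 2)) / 4) * b)
        (((1 + Real.sqrt (1 - lam ^ 2)) / 4) * d + ((1 - Real.sqrt (1 - lam ^ 2)) / 4) * c) := by
  simp only [phiMap, fam, mul_add, add_mul, mul_smul_comm, smul_mul_assoc,
    conjZ, conjX, updf_vz hN, updf_vo hN, updf_vzf hN, updf_vof hN,
    vzf_last hN, vof_last hN]
  simp only [vz, vo, zsC_zero, zsC_one]
  push_cast
  module

lemma forall_zero_iff {N : ℕ} (v : Fin N → Fin 2) : (∀ i, v i = 0) ↔ v = vz N :=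
  ⟨fun h => funext h, fun h i => congrFun h i⟩

lemma forall_one_iff {N : ℕ} (v : Fin N → Fin 2) : (∀ i, v i = 1) ↔ v = vo N :=
  ⟨fun h => funext h, fun h i => congrFun h i⟩

lemma outer_allZero {N : ℕ} :
    outer N (allZero N) = Matrix.single (vz N) (vz N) (1 : ℂ) := by
  ext v w
  simp only [outer, Matrix.vecMulVec_apply, Pi.star_apply, allZero,
    forall_zero_iff, Matrix.single, Matrix.of_apply]
  by_cases hv : v = vz N <;> by_cases hw : w = vz N <;>
    simp [hv, hw, eq_comm]

lemma outer_allOne {N : ℕ} :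
    outer N (allOne N) = Matrix.single (vo N) (vo N) (1 : ℂ) := by
  ext v w
  simp only [outer, Matrix.vecMulVec_apply, Pi.star_apply, allOne,
    forall_one_iff, Matrix.single, Matrix.of_apply]
  by_cases hv : v = vo N <;> by_cases hw : w = vo N <;>
    simp [hv, hw, eq_comm]

lemma genGhz_apply {N : ℕ} (α : ℝ) (v : Fin N → Fin 2) :
    genGhzVec N α v = if v = vz N then ((Real.sqrt α : ℝ) : ℂ)
      else if v = vo N then ((Real.sqrt (1 - α) : ℝ) : ℂ) else 0 := by
  simp only [genGhzVec]
  rw [if_congr (forall_zero_iff v) rfl (if_congr (forall_one_iff v) rfl rfl)]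

lemma outer_genGhz {N : ℕ} (hN : 3 ≤ N) (α : ℝ) (hα0 : 0 ≤ α) (hα1 : α ≤ 1) :
    outer N (genGhzVec N α) =
      (α : ℂ) • Matrix.single (vz N) (vz N) (1 : ℂ)
      + ((1 - α : ℝ) : ℂ) • Matrix.single (vo N) (vo N) (1 : ℂ)
      + ((Real.sqrt α * Real.sqrt (1 - α) : ℝ) : ℂ) •
          (Matrix.single (vz N) (vo N) (1 : ℂ)
            + Matrix.single (vo N) (vz N) (1 : ℂ)) := by
  have h1 : (0:ℝ) ≤ 1 - α := by linarith
  ext v w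
  simp only [outer, Matrix.vecMulVec_apply, Pi.star_apply, genGhz_apply,
    Matrix.add_apply, Matrix.smul_apply, Matrix.single, Matrix.of_apply,
    smul_eq_mul]
  by_cases hv : v = vz N <;> by_cases hw : w = vz N <;>
    by_cases hv1 : v = vo N <;> by_cases hw1 : w = vo N <;>
    simp_all [vz_ne_vo hN, (vz_ne_vo hN).symm, Complex.conj_ofReal,
      ← Complex.ofReal_mul, Real.mul_self_sqrt, hα0, h1, eq_comm, mul_comm]

lemma mixedState_eq_fam {N : ℕ} (hN : 3 ≤ N) (α p₁ p₂ p₃ : ℝ)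
    (hα0 : 0 ≤ α) (hα1 : α ≤ 1) :
    mixedState N α p₁ p₂ p₃ =
      fam N (p₁ * α + p₂) (p₁ * (1 - α) + p₃)
        (p₁ * (Real.sqrt α * Real.sqrt (1 - α))) 0 0 0 := by
  rw [mixedState, outer_allZero, outer_allOne, outer_genGhz hN α hα0 hα1]
  simp only [fam]
  push_cast
  module

lemma key_ineq (c₁ ε : ℝ) (hc₁ : 0 < c₁) (hε0 : 0 < ε) (n j : ℕ) (hjn : j ≤ n)
    (hεc : ε * (((n:ℝ) + 1) * 2 ^ n) ≤ c₁) :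
    (j:ℝ) * ε ^ 2 / 4 < ε * (c₁ / 2 ^ j) := by
  have hjn' : (j:ℝ) ≤ (n:ℝ) := by exact_mod_cast hjn
  have h2j : (2:ℝ) ^ j ≤ 2 ^ n := by
    apply pow_le_pow_right₀ (by norm_num)
    omega
  have h2jp : (0:ℝ) < 2 ^ j := by positivity
  have key : (j:ℝ) * ε * 2 ^ j < c₁ := by
    have e1 : (j:ℝ) * ε ≤ (n:ℝ) * ε := mul_le_mul_of_nonneg_right hjn' hε0.le
    have e2 : (j:ℝ) * ε * 2 ^ j ≤ (n:ℝ) * ε * 2 ^ n :=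
      mul_le_mul e1 h2j (le_of_lt h2jp) (by positivity)
    have e3 : (n:ℝ) * ε * 2 ^ n < c₁ := by
      have : (0:ℝ) < ε * 2 ^ n := by positivity
      nlinarith
    linarith
  rw [mul_div_assoc' ε c₁ ((2:ℝ) ^ j), div_lt_div_iff₀ (by norm_num) h2jp]
  nlinarith [mul_lt_mul_of_pos_left key hε0, mul_pos hε0 hc₁]

set_option maxHeartbeats 1000000 in
/-- arbitrarily many sequential detections for the generalized-GHZ
mixed family. For every integer `N ≥ 3`, every `α ∈ (0,1)`, every `p_1 > 0`,
`p_2, p_3 ≥ 0` with `p_1+p_2+p_3 = 1`, and every natural number `n`, there exist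
sharpness parameters `λ_1, …, λ_n ∈ (0,1)` such that, setting
`ρ_1 = p_1|ψ⟩⟨ψ| + p_2|0…0⟩⟨0…0| + p_3|1…1⟩⟨1…1|` with
`|ψ⟩ = √α|0…0⟩ + √(1−α)|1…1⟩`, and `ρ_k = (id ⊗ Φ_{λ_{k−1}})(ρ_{k−1})` for
`2 ≤ k ≤ n` (the map acting on the `N`-th qubit), one has `Tr(W^{λ_k} ρ_k) < 0` for
every `k = 1, …, n`. -/
theorem mixedState_arbitrarily_many_sequential_detections
    (N : ℕ) (hN : 3 ≤ N) (α : ℝ) (hα : α ∈ Set.Ioo (0 : ℝ) 1)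
    (p₁ p₂ p₃ : ℝ) (hp₁ : 0 < p₁) (hp₂ : 0 ≤ p₂) (hp₃ : 0 ≤ p₃)
    (hsum : p₁ + p₂ + p₃ = 1) (n : ℕ) :
    ∃ lam : ℕ → ℝ,
      (∀ k, 1 ≤ k → k ≤ n → lam k ∈ Set.Ioo (0 : ℝ) 1) ∧
      ∀ ρ : ℕ → QM N,
        ρ 1 = mixedState N α p₁ p₂ p₃ →
        (∀ k, 2 ≤ k → k ≤ n →
          ρ k = phiMap N ⟨N - 1, by omega⟩ (lam (k - 1)) (ρ (k - 1))) →
        ∀ k, 1 ≤ k → k ≤ n → ((ghzWitnessMod N (lam k) * ρ k).trace).re < 0 := by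
  obtain ⟨hα0, hα1⟩ := hα
  set a₁ := p₁ * α + p₂ with ha₁
  set b₁ := p₁ * (1 - α) + p₃ with hb₁
  set c₁ := p₁ * (Real.sqrt α * Real.sqrt (1 - α)) with hc₁def
  have hc₁ : 0 < c₁ :=
    mul_pos hp₁ (mul_pos (Real.sqrt_pos.mpr hα0) (Real.sqrt_pos.mpr (by linarith)))
  have hd : (0:ℝ) < ((n:ℝ) + 1) * 2 ^ n := by positivity
  set ε := min (1/2 : ℝ) (c₁ / (((n:ℝ) + 1) * 2 ^ n)) with hεdef
  have hε0 : 0 < ε := lt_min (by norm_num) (div_pos hc₁ hd)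
  have hεhalf : ε ≤ 1/2 := min_le_left _ _
  have hε1 : ε < 1 := lt_of_le_of_lt hεhalf (by norm_num)
  have hεc : ε * (((n:ℝ) + 1) * 2 ^ n) ≤ c₁ := by
    rw [← le_div_iff₀ hd]
    exact min_le_right _ _
  set s := Real.sqrt (1 - ε ^ 2) with hsdef
  have hs0 : 0 ≤ s := Real.sqrt_nonneg _
  have h1ε : 0 ≤ 1 - ε ^ 2 := by nlinarith
  have hs1 : s ≤ 1 := by rw [hsdef]; exact Real.sqrt_le_one.mpr (by nlinarith)
  have hs2 : 1 - ε ^ 2 ≤ s := by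
    nlinarith [Real.sq_sqrt h1ε, Real.sqrt_nonneg (1 - ε ^ 2)]
  refine ⟨fun _ => ε, fun k _ _ => ⟨hε0, hε1⟩, ?_⟩
  intro ρ hρ1 hstep
  set stp : ℝ×ℝ×ℝ×ℝ×ℝ×ℝ → ℝ×ℝ×ℝ×ℝ×ℝ×ℝ := fun q =>
    (((3+s)/4)*q.1 + ((1-s)/4)*q.2.2.2.1,
     ((3+s)/4)*q.2.1 + ((1-s)/4)*q.2.2.2.2.1,
     ((1+s)/4)*q.2.2.1 + ((1-s)/4)*q.2.2.2.2.2,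
     ((3+s)/4)*q.2.2.2.1 + ((1-s)/4)*q.1,
     ((3+s)/4)*q.2.2.2.2.1 + ((1-s)/4)*q.2.1,
     ((1+s)/4)*q.2.2.2.2.2 + ((1-s)/4)*q.2.2.1) with hstp
  set Q : ℕ → ℝ×ℝ×ℝ×ℝ×ℝ×ℝ := fun j => stp^[j] (a₁, b₁, c₁, 0, 0, 0) with hQ
  have hQ0 : Q 0 = (a₁, b₁, c₁, 0, 0, 0) := rfl
  have hQs : ∀ j, Q (j+1) = stp (Q j) := by
    intro j
    simp only [hQ]
    exact Function.iterate_succ_apply' stp j _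
  -- invariants
  have hinv : ∀ j, 0 ≤ (Q j).1 ∧ 0 ≤ (Q j).2.1 ∧ 0 ≤ (Q j).2.2.2.1 ∧ 0 ≤ (Q j).2.2.2.2.1
      ∧ (Q j).1 + (Q j).2.1 + (Q j).2.2.2.1 + (Q j).2.2.2.2.1 = 1
      ∧ (Q j).2.2.1 + (Q j).2.2.2.2.2 = c₁ / 2 ^ j
      ∧ (Q j).2.2.2.1 + (Q j).2.2.2.2.1 ≤ (j : ℝ) * ε ^ 2 / 4 := by
    intro j
    induction j with
    | zero =>
        rw [hQ0]
        refine ⟨by nlinarith, by nlinarith, le_refl 0, le_refl 0, by ring_nf; linarith, by norm_num, by norm_num⟩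
    | succ j ih =>
        obtain ⟨h1, h2, h3, h4, h5, h6, h7⟩ := ih
        rw [hQs j]
        simp only [hstp]
        have hδ : 0 ≤ (Q j).2.2.2.1 + (Q j).2.2.2.2.1 := by linarith
        have hab : (Q j).1 + (Q j).2.1 ≤ 1 := by linarith
        have hab0 : 0 ≤ (Q j).1 + (Q j).2.1 := by linarith
        refine ⟨by nlinarith, by nlinarith, by nlinarith, by nlinarith, by ring_nf; nlinarith, ?_, ?_⟩
        · have he : ((1+s)/4)*(Q j).2.2.1 + ((1-s)/4)*(Q j).2.2.2.2.2
            + (((1+s)/4)*(Q j).2.2.2.2.2 + ((1-s)/4)*(Q j).2.2.1)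
              = ((Q j).2.2.1 + (Q j).2.2.2.2.2) / 2 := by ring
          rw [he, h6, pow_succ]
          ring
        · push_cast
          nlinarith [mul_le_mul_of_nonneg_left hab (show (0:ℝ) ≤ (1-s)/4 by linarith),
            mul_le_mul_of_nonneg_left h7 (show (0:ℝ) ≤ (3+s)/4 by linarith),
            mul_nonneg (show (0:ℝ) ≤ 1 - s by linarith) hab0]
  -- the states
  have hfam : ∀ k, 1 ≤ k → k ≤ n →
      ρ k = fam N (Q (k-1)).1 (Q (k-1)).2.1 (Q (k-1)).2.2.1 (Q (k-1)).2.2.2.1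
        (Q (k-1)).2.2.2.2.1 (Q (k-1)).2.2.2.2.2 := by
    intro k
    induction k with
    | zero => omega
    | succ k ih =>
        intro h1 h2
        rcases Nat.eq_zero_or_pos k with hk0 | hk1
        · subst hk0
          rw [hρ1, mixedState_eq_fam hN α p₁ p₂ p₃ (le_of_lt hα0) (le_of_lt hα1)]
          norm_num [hQ0]
          rfl
        · have hst := hstep (k+1) (by omega) h2
          simp only [Nat.add_sub_cancel] at hst ⊢
          rw [hst, ih (by omega) (by omega)]
          have hk' : k - 1 + 1 = k := by omega
          rw [← hk', hQs (k-1), hk']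
          simp only [hstp]
          exact phiMap_fam hN ε _ _ _ _ _ _
  -- conclusion
  intro k hk1 hkn
  rw [hfam k hk1 hkn, trace_W_fam hN, Complex.ofReal_re]
  obtain ⟨-, -, h3, h4, -, h6, h7⟩ := hinv (k-1)
  rw [h6]
  show 2 * ((Q (k-1)).2.2.2.1 + (Q (k-1)).2.2.2.2.1) - 2 * ε * (c₁ / 2 ^ (k-1)) < 0
  clear hstep hρ1 hfam hinv hQs hQ0
  have hlt := key_ineq c₁ ε hc₁ hε0 n (k-1) (by omega) hεc
  have hδlt : (Q (k-1)).2.2.2.1 + (Q (k-1)).2.2.2.2.1 < ε * (c₁ / 2 ^ (k-1)) :=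
    lt_of_le_of_lt h7 hlt
  linarith

end
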